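/- arXiv:1312.5712 — 4 statements merged into one kernel-verified Lean document; each statement's English description precedes it below -/
import Mathlib

section
/- For every x > 0, the improper integral ∫₀^∞ e^{-ζ/x}/(1+ζ) dζ converges, and the function f(x) = ∫₀^∞ e^{-ζ/x}/(1+ζ) dζ is differentiable on (0,∞) and satisfies the Euler differential equation x² f'(x) + f(x) = x for all x > 0. -/
open Real MeasureTheory Set

/-- For every `x > 0` the integral `∫₀^∞ e^{-ζ/x}/(1+ζ) dζ` converges, and
`f(x) = ∫₀^∞ e^{-ζ/x}/(1+ζ) dζ` is differentiable on `(0,∞)` and satisfies the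
Euler differential equation `x² f'(x) + f(x) = x` there. -/
theorem euler_integral_solution
    (f : ℝ → ℝ) (hf : ∀ x, f x = ∫ ζ in Ioi (0 : ℝ), Real.exp (-ζ / x) / (1 + ζ)) :
    ∀ x > (0 : ℝ),
      IntegrableOn (fun ζ => Real.exp (-ζ / x) / (1 + ζ)) (Ioi 0) ∧
      ∃ f' : ℝ, HasDerivAt f f' x ∧ x ^ 2 * f' + f x = x := by
  intro x hx
  have hfx : f = fun y => ∫ ζ in Ioi (0 : ℝ), Real.exp (-ζ / y) / (1 + ζ) := funext hf
  -- measurability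
  have hmeas : ∀ y : ℝ, AEStronglyMeasurable (fun ζ => Real.exp (-ζ / y) / (1 + ζ))
      (volume.restrict (Ioi (0:ℝ))) := by
    intro y
    apply Measurable.aestronglyMeasurable
    fun_prop
  -- integrability of the integrand at each positive point
  have hint : ∀ y : ℝ, 0 < y →
      IntegrableOn (fun ζ => Real.exp (-ζ / y) / (1 + ζ)) (Ioi 0) := by
    intro y hy
    refine Integrable.mono (exp_neg_integrableOn_Ioi 0 (b := 1 / y) (by positivity))
      (hmeas y) ?_
    filter_upwards [ae_restrict_mem measurableSet_Ioi] with ζ hζ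
    have hζ0 : (0:ℝ) < ζ := hζ
    have h1 : (1:ℝ) ≤ 1 + ζ := by linarith
    have hpos : (0:ℝ) < Real.exp (-ζ / y) / (1 + ζ) := by positivity
    rw [Real.norm_eq_abs, Real.norm_eq_abs, abs_of_pos hpos,
      abs_of_pos (Real.exp_pos _)]
    have : Real.exp (-ζ / y) / (1 + ζ) ≤ Real.exp (-ζ / y) / 1 := by
      apply div_le_div_of_nonneg_left (Real.exp_pos _).le one_pos h1
    calc Real.exp (-ζ / y) / (1 + ζ) ≤ Real.exp (-ζ / y) := by linarith
      _ = Real.exp (-(1/y) * ζ) := by ring_nf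
  refine ⟨hint x hx, ?_⟩
  -- differentiation under the integral sign
  set F' : ℝ → ℝ → ℝ := fun y ζ => ζ / y ^ 2 * Real.exp (-ζ / y) / (1 + ζ) with hF'
  have key := hasDerivAt_integral_of_dominated_loc_of_deriv_le
    (F := fun y ζ => Real.exp (-ζ / y) / (1 + ζ)) (F' := F')
    (x₀ := x) (s := Metric.ball x (x / 2)) (μ := volume.restrict (Ioi (0:ℝ)))
    (bound := fun ζ => 4 / x ^ 2 * Real.exp (-(2 / (3 * x)) * ζ))
    (Metric.ball_mem_nhds x (by positivity))
    (Filter.Eventually.of_forall fun y => hmeas y)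
    (hint x hx)
    (by apply Measurable.aestronglyMeasurable; fun_prop)
    ?_ ?_ ?_
  · obtain ⟨hF'int, hderiv⟩ := key
    refine ⟨∫ ζ in Ioi (0:ℝ), F' x ζ, by rw [hfx]; exact hderiv, ?_⟩
    -- compute x^2 * f' + f x
    have hconst : x ^ 2 * ∫ ζ in Ioi (0:ℝ), F' x ζ
        = ∫ ζ in Ioi (0:ℝ), ζ * Real.exp (-ζ / x) / (1 + ζ) := by
      rw [← integral_const_mul]
      congr 1
      ext ζ
      simp only [hF']
      field_simp
    have hintg : IntegrableOn (fun ζ => ζ * Real.exp (-ζ / x) / (1 + ζ)) (Ioi 0) := by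
      have := hF'int.const_mul (x ^ 2)
      refine this.congr (Filter.Eventually.of_forall fun ζ => ?_)
      simp only [hF']
      field_simp
    rw [hconst, hf x, ← integral_add hintg (hint x hx)]
    have hcongr : ∫ ζ in Ioi (0:ℝ),
        (ζ * Real.exp (-ζ / x) / (1 + ζ) + Real.exp (-ζ / x) / (1 + ζ))
        = ∫ ζ in Ioi (0:ℝ), Real.exp (-ζ / x) := by
      apply setIntegral_congr_fun measurableSet_Ioi
      intro ζ hζ
      have hζ0 : (0:ℝ) < ζ := hζ
      have h1 : (1:ℝ) + ζ ≠ 0 := by positivity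
      field_simp
      ring
    rw [hcongr]
    have : ∫ ζ in Ioi (0:ℝ), Real.exp (-ζ / x)
        = ∫ ζ in Ioi (0:ℝ), Real.exp (-(x⁻¹ * ζ)) := by
      congr 1; ext ζ; rw [neg_div, div_eq_inv_mul]
    rw [this,
      integral_comp_mul_left_Ioi (fun t => Real.exp (-t)) 0 (inv_pos.mpr hx),
      mul_zero, integral_exp_neg_Ioi_zero]
    simp [hx.ne']
  · -- bound
    filter_upwards [ae_restrict_mem measurableSet_Ioi] with ζ hζ y hy
    have hζ0 : (0:ℝ) < ζ := hζ
    rw [Metric.mem_ball, Real.dist_eq, abs_lt] at hy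
    have hy1 : x / 2 < y := by linarith
    have hy2 : y < 3 * x / 2 := by linarith
    have hy0 : (0:ℝ) < y := lt_trans (by positivity) hy1
    have h1 : (1:ℝ) < 1 + ζ := by linarith
    have hF'pos : (0:ℝ) < ζ / y ^ 2 * Real.exp (-ζ / y) / (1 + ζ) := by positivity
    rw [hF', Real.norm_eq_abs, abs_of_pos hF'pos]
    have hfrac : ζ / (1 + ζ) ≤ 1 := by
      rw [div_le_one (by linarith)]; linarith
    have hexp : Real.exp (-ζ / y) ≤ Real.exp (-(2 / (3 * x)) * ζ) := by
      apply Real.exp_le_exp.mpr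
      rw [neg_div, neg_mul, neg_le_neg_iff, div_mul_eq_mul_div,
        div_le_div_iff₀ (by positivity) hy0]
      nlinarith
    have hsq : 1 / y ^ 2 ≤ 4 / x ^ 2 := by
      rw [div_le_div_iff₀ (by positivity) (by positivity : (0:ℝ) < x^2)]
      nlinarith
    calc ζ / y ^ 2 * Real.exp (-ζ / y) / (1 + ζ)
        = (ζ / (1 + ζ)) * (1 / y ^ 2) * Real.exp (-ζ / y) := by ring
      _ ≤ 1 * (4 / x ^ 2) * Real.exp (-(2 / (3 * x)) * ζ) := by
          apply mul_le_mul
          · apply mul_le_mul hfrac hsq (by positivity) (by norm_num)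
          · exact hexp
          · positivity
          · positivity
      _ = 4 / x ^ 2 * Real.exp (-(2 / (3 * x)) * ζ) := by ring
  · -- bound integrable
    exact ((exp_neg_integrableOn_Ioi 0 (b := 2 / (3 * x)) (by positivity)).const_mul _)
  · -- derivative
    filter_upwards [ae_restrict_mem measurableSet_Ioi] with ζ hζ y hy
    rw [Metric.mem_ball, Real.dist_eq, abs_lt] at hy
    have hy0 : (0:ℝ) < y := by linarith
    have h1 : HasDerivAt (fun t : ℝ => -ζ / t) (ζ / y ^ 2) y := by
      have := (hasDerivAt_inv hy0.ne').const_mul (-ζ)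
      simpa [div_eq_mul_inv, neg_mul, neg_neg, pow_two] using this
    have h2 := (h1.exp).div_const (1 + ζ)
    simpa [hF', mul_comm, mul_div_assoc] using h2
end

section
/- (Proposition) Let f(x) = ∫₀^∞ e^{-ζ/x}/(1+ζ) dζ and f_k(x) = ∑_{n=0}^{k-1} (-1)^n n! x^{n+1}. Then for every x > 0 and every natural number k, |f(x) − f_k(x)| ≤ k! · x^{k+1}; i.e., the error of the k-th partial sum of the divergent series is bounded by the first neglected term. -/
open Real MeasureTheory Set Finset

lemma euler_aux_integrable (n : ℕ) {x : ℝ} (hx : 0 < x) :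
    IntegrableOn (fun ζ : ℝ => ζ ^ n * Real.exp (-ζ / x)) (Ioi 0) := by
  have h := integrableOn_rpow_mul_exp_neg_mul_rpow (s := (n : ℝ)) (p := 1) (b := 1 / x)
    (lt_of_lt_of_le (by norm_num) (Nat.cast_nonneg n)) one_pos (by positivity)
  refine h.congr_fun (fun ζ hζ => ?_) measurableSet_Ioi
  rw [Set.mem_Ioi] at hζ
  beta_reduce
  rw [Real.rpow_one, Real.rpow_natCast]
  ring_nf

lemma euler_aux_integral (n : ℕ) {x : ℝ} (hx : 0 < x) :
    ∫ ζ in Ioi (0 : ℝ), ζ ^ n * Real.exp (-ζ / x) = (Nat.factorial n : ℝ) * x ^ (n + 1) := by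
  have h := Real.integral_rpow_mul_exp_neg_mul_Ioi (a := (n : ℝ) + 1) (r := 1 / x)
    (by positivity) (by positivity)
  have he : ∀ ζ ∈ Ioi (0 : ℝ), ζ ^ ((n : ℝ) + 1 - 1) * Real.exp (-(1 / x * ζ))
      = ζ ^ n * Real.exp (-ζ / x) := by
    intro ζ hζ
    rw [Set.mem_Ioi] at hζ
    rw [add_sub_cancel_right, Real.rpow_natCast]
    ring_nf
  rw [setIntegral_congr_fun measurableSet_Ioi he] at h
  rw [h, one_div_one_div, Real.Gamma_nat_eq_factorial,
    show ((n : ℝ) + 1) = ((n + 1 : ℕ) : ℝ) by push_cast; ring, Real.rpow_natCast]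
  ring

/-- For `f(x) = ∫₀^∞ e^{-ζ/x}/(1+ζ) dζ` and `f_k(x) = ∑_{n=0}^{k-1} (-1)^n n! x^{n+1}`,
for every `x > 0` and every natural number `k`, `|f(x) − f_k(x)| ≤ k! x^{k+1}`. -/
theorem euler_error_le_first_neglected_term
    (f : ℝ → ℝ) (hf : ∀ x, f x = ∫ ζ in Ioi (0 : ℝ), Real.exp (-ζ / x) / (1 + ζ))
    (fk : ℕ → ℝ → ℝ)
    (hfk : ∀ k x, fk k x = ∑ n ∈ Finset.range k,
      (-1 : ℝ) ^ n * (Nat.factorial n : ℝ) * x ^ (n + 1))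
    (x : ℝ) (hx : 0 < x) (k : ℕ) :
    |f x - fk k x| ≤ (Nat.factorial k : ℝ) * x ^ (k + 1) := by
  -- the remainder integrand
  set g : ℝ → ℝ := fun ζ => (-1 : ℝ) ^ k * (ζ ^ k / (1 + ζ)) * Real.exp (-ζ / x) with hg
  -- measurability of g on Ioi 0
  have hgmeas : AEStronglyMeasurable g (volume.restrict (Ioi (0 : ℝ))) := by
    refine ContinuousOn.aestronglyMeasurable ?_ measurableSet_Ioi
    refine ContinuousOn.mul (ContinuousOn.mul continuousOn_const ?_) ?_
    · exact ContinuousOn.div (continuousOn_pow k) (by fun_prop)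
        (fun ζ hζ => by rw [Set.mem_Ioi] at hζ; positivity)
    · fun_prop
  -- the bound |g ζ| ≤ ζ^k * exp(-ζ/x) on Ioi 0
  have hbound : ∀ ζ ∈ Ioi (0 : ℝ), ‖g ζ‖ ≤ ζ ^ k * Real.exp (-ζ / x) := by
    intro ζ hζ
    rw [Set.mem_Ioi] at hζ
    have h1 : (0:ℝ) < 1 + ζ := by linarith
    rw [hg]
    simp only
    rw [norm_mul, norm_mul, norm_pow, norm_neg, norm_one, one_pow, one_mul,
      Real.norm_eq_abs, Real.norm_eq_abs, abs_of_nonneg (by positivity : (0:ℝ) ≤ ζ ^ k / (1 + ζ)),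
      Real.abs_exp]
    gcongr
    rw [div_le_iff₀ h1]
    nlinarith [pow_nonneg hζ.le k]
  have hbound' : ∀ᵐ ζ ∂(volume.restrict (Ioi (0:ℝ))), ‖g ζ‖ ≤ ζ ^ k * Real.exp (-ζ / x) := by
    filter_upwards [ae_restrict_mem measurableSet_Ioi] using hbound
  -- g is integrable
  have hgint : IntegrableOn g (Ioi (0 : ℝ)) :=
    Integrable.mono' (euler_aux_integrable k hx) hgmeas hbound'
  -- pointwise decomposition on Ioi 0
  have hdecomp : ∀ ζ ∈ Ioi (0 : ℝ), Real.exp (-ζ / x) / (1 + ζ)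
      = (∑ n ∈ Finset.range k, (-1 : ℝ) ^ n * (ζ ^ n * Real.exp (-ζ / x))) + g ζ := by
    intro ζ hζ
    rw [Set.mem_Ioi] at hζ
    have h1 : (1:ℝ) + ζ ≠ 0 := by positivity
    have hgeom : ∑ n ∈ Finset.range k, (-ζ : ℝ) ^ n = ((-ζ) ^ k - 1) / ((-ζ) - 1) :=
      geom_sum_eq (by intro h; rw [neg_eq_iff_eq_neg] at h; linarith) k
    have : (∑ n ∈ Finset.range k, (-1 : ℝ) ^ n * ζ ^ n) = (1 - (-ζ) ^ k) / (1 + ζ) := by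
      simp_rw [← neg_pow]
      rw [hgeom, show (-ζ:ℝ) - 1 = -(1 + ζ) by ring, div_neg, ← neg_div]
      congr 1
      ring
    rw [hg]
    simp only
    have hsum : (∑ n ∈ Finset.range k, (-1 : ℝ) ^ n * (ζ ^ n * Real.exp (-ζ / x)))
        = (∑ n ∈ Finset.range k, (-1 : ℝ) ^ n * ζ ^ n) * Real.exp (-ζ / x) := by
      rw [Finset.sum_mul]; congr 1; ext n; ring
    rw [hsum, this, neg_pow]
    field_simp
    ring
  -- integrate the decomposition
  have hsumint : ∀ n, IntegrableOn (fun ζ : ℝ => (-1 : ℝ) ^ n * (ζ ^ n * Real.exp (-ζ / x)))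
      (Ioi (0 : ℝ)) := fun n => (euler_aux_integrable n hx).const_mul _
  have hfval : f x = (∑ n ∈ Finset.range k,
      ∫ ζ in Ioi (0:ℝ), (-1 : ℝ) ^ n * (ζ ^ n * Real.exp (-ζ / x))) + ∫ ζ in Ioi (0:ℝ), g ζ := by
    rw [hf, setIntegral_congr_fun measurableSet_Ioi hdecomp,
      integral_add (integrable_finset_sum _ (fun n _ => hsumint n)) hgint,
      integral_finset_sum _ (fun n _ => hsumint n)]
  have hterm : ∀ n, (∫ ζ in Ioi (0:ℝ), (-1 : ℝ) ^ n * (ζ ^ n * Real.exp (-ζ / x)))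
      = (-1 : ℝ) ^ n * (Nat.factorial n : ℝ) * x ^ (n + 1) := by
    intro n
    rw [integral_const_mul, euler_aux_integral n hx]
    ring
  have hkey : f x - fk k x = ∫ ζ in Ioi (0:ℝ), g ζ := by
    rw [hfval, hfk]
    simp_rw [hterm]
    ring
  rw [hkey, ← Real.norm_eq_abs]
  calc ‖∫ ζ in Ioi (0:ℝ), g ζ‖ ≤ ∫ ζ in Ioi (0:ℝ), ζ ^ k * Real.exp (-ζ / x) := by
        refine norm_integral_le_of_norm_le (euler_aux_integrable k hx) hbound'
    _ = (Nat.factorial k : ℝ) * x ^ (k + 1) := euler_aux_integral k hx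
end

section
/- Let f(x) = ∫₀^∞ e^{-ζ/x}/(1+ζ) dζ and f_k(x) = ∑_{n=0}^{k-1} (-1)^n n! x^{n+1}. For every natural number k, f(x) − f_k(x) = O(x^{k+1}) as x → 0⁺; i.e., the divergent series ∑_{n≥0} (-1)^n n! x^{n+1} is the asymptotic expansion of f at 0⁺. -/
open Real MeasureTheory Set Finset Filter Asymptotics

lemma aux_int_pow (n : ℕ) {x : ℝ} (hx : 0 < x) :
    IntegrableOn (fun t : ℝ => t ^ n * Real.exp (-t / x)) (Ioi 0) := by
  have h := integrableOn_rpow_mul_exp_neg_mul_rpow (s := (n : ℝ)) (p := 1) (b := 1 / x)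
    (by exact_mod_cast neg_one_lt_zero.trans_le (Nat.cast_nonneg n)) one_pos (by positivity)
  refine h.congr_fun (fun t ht => ?_) measurableSet_Ioi
  beta_reduce
  rw [Real.rpow_one, Real.rpow_natCast]
  congr 1
  ring

lemma aux_val (n : ℕ) {x : ℝ} (hx : 0 < x) :
    ∫ t in Ioi (0:ℝ), t ^ n * Real.exp (-t / x) = n.factorial * x ^ (n + 1) := by
  have h := Real.integral_rpow_mul_exp_neg_mul_Ioi (a := (n:ℝ)+1) (r := 1/x)
    (by positivity) (by positivity)
  rw [show ∫ t in Ioi (0:ℝ), t ^ n * Real.exp (-t / x)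
      = ∫ t in Ioi (0:ℝ), t ^ ((n:ℝ)+1-1) * Real.exp (-(1/x * t)) from
    setIntegral_congr_fun measurableSet_Ioi (fun t ht => by
      rw [show (n:ℝ)+1-1 = (n:ℝ) by ring, Real.rpow_natCast]
      congr 1
      ring), h, one_div_one_div, show ((n:ℝ)+1) = ((n+1:ℕ):ℝ) by push_cast; ring,
    Real.rpow_natCast]
  push_cast
  rw [Real.Gamma_nat_eq_factorial]
  ring

/-- For `f(x) = ∫₀^∞ e^{-ζ/x}/(1+ζ) dζ` and `f_k(x) = ∑_{n=0}^{k-1} (-1)^n n! x^{n+1}`,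
for every natural number `k`, `f(x) − f_k(x) = O(x^{k+1})` as `x → 0⁺`. -/
theorem euler_asymptotic_expansion
    (f : ℝ → ℝ) (hf : ∀ x, f x = ∫ ζ in Ioi (0 : ℝ), Real.exp (-ζ / x) / (1 + ζ))
    (fk : ℕ → ℝ → ℝ)
    (hfk : ∀ k x, fk k x = ∑ n ∈ Finset.range k,
      (-1 : ℝ) ^ n * (Nat.factorial n : ℝ) * x ^ (n + 1))
    (k : ℕ) :
    (fun x => f x - fk k x) =O[nhdsWithin 0 (Ioi 0)] fun x => x ^ (k + 1) := by
  rw [isBigO_iff]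
  refine ⟨k.factorial, ?_⟩
  filter_upwards [self_mem_nhdsWithin] with x hx
  replace hx : 0 < x := hx
  set g : ℝ → ℝ := fun t => (-1:ℝ)^k * (t^k * Real.exp (-t/x) / (1+t)) with hg_def
  have hg0 : IntegrableOn (fun t : ℝ => t^k * Real.exp (-t/x) / (1+t)) (Ioi 0) := by
    refine Integrable.mono (aux_int_pow k hx) ?_ ?_
    · exact ((measurable_id.pow_const k).mul
        ((measurable_id.neg.div_const x).exp)).div
        (measurable_const.add measurable_id) |>.aestronglyMeasurable
    · filter_upwards [ae_restrict_mem measurableSet_Ioi] with t ht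
      have ht' : (0:ℝ) < t := ht
      rw [Real.norm_eq_abs, Real.norm_eq_abs, abs_of_nonneg (by positivity),
        abs_of_nonneg (by positivity)]
      exact div_le_self (by positivity) (by linarith)
  have hg_int : IntegrableOn g (Ioi 0) := hg0.const_mul _
  have hsum_int : IntegrableOn
      (fun t : ℝ => ∑ n ∈ Finset.range k, (-1:ℝ)^n * (t^n * Real.exp (-t/x))) (Ioi 0) :=
    integrable_finset_sum _ (fun n _ => (aux_int_pow n hx).const_mul _)
  have hsum : ∀ t : ℝ, 0 < t →
      (∑ n ∈ Finset.range k, (-1:ℝ)^n * t^n) * (1+t) = 1 - (-1:ℝ)^k * t^k := by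
    intro t ht
    have h := geom_sum_mul (-t) k
    simp_rw [show ∀ n : ℕ, (-t:ℝ)^n = (-1)^n * t^n from fun n => by rw [neg_pow]] at h
    linear_combination -h
  have key : f x = fk k x + ∫ t in Ioi (0:ℝ), g t := by
    rw [hf, hfk]
    have h1 : (∫ t in Ioi (0:ℝ), Real.exp (-t/x) / (1+t))
        = ∫ t in Ioi (0:ℝ),
          ((∑ n ∈ Finset.range k, (-1:ℝ)^n * (t^n * Real.exp (-t/x))) + g t) := by
      refine setIntegral_congr_fun measurableSet_Ioi (fun t ht => ?_)
      have ht' : (0:ℝ) < t := ht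
      have hden : (1:ℝ)+t ≠ 0 := by positivity
      have hs := hsum t ht'
      rw [show (∑ n ∈ Finset.range k, (-1:ℝ)^n * (t^n * Real.exp (-t/x)))
          = (∑ n ∈ Finset.range k, (-1:ℝ)^n * t^n) * Real.exp (-t/x) from by
        rw [Finset.sum_mul]; exact Finset.sum_congr rfl fun n _ => by ring]
      rw [hg_def]
      field_simp
      linear_combination -hs
    rw [h1, integral_add hsum_int hg_int,
      integral_finset_sum _ (fun n _ => (aux_int_pow n hx).const_mul _)]
    congr 1
    refine Finset.sum_congr rfl fun n _ => ?_
    rw [integral_const_mul, aux_val n hx]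
    ring
  have habs : ∀ t ∈ Ioi (0:ℝ), |g t| ≤ t^k * Real.exp (-t/x) := by
    intro t ht
    have ht' : (0:ℝ) < t := ht
    rw [hg_def, abs_mul, abs_pow, abs_neg, abs_one, one_pow, one_mul,
      abs_of_nonneg (by positivity)]
    exact div_le_self (by positivity) (by linarith)
  have hbd : |∫ t in Ioi (0:ℝ), g t| ≤ k.factorial * x^(k+1) := by
    calc |∫ t in Ioi (0:ℝ), g t| ≤ ∫ t in Ioi (0:ℝ), |g t| := by
          simpa [Real.norm_eq_abs] using
            norm_integral_le_integral_norm (μ := volume.restrict (Ioi 0)) g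
      _ ≤ ∫ t in Ioi (0:ℝ), t^k * Real.exp (-t/x) :=
          setIntegral_mono_on hg_int.abs (aux_int_pow k hx) measurableSet_Ioi habs
      _ = k.factorial * x^(k+1) := aux_val k hx
  rw [key]
  simp only [Real.norm_eq_abs, add_sub_cancel_left]
  rw [abs_of_nonneg (by positivity : (0:ℝ) ≤ x^(k+1))]
  linarith
end

section
/- (Regularity of Borel summation, property (1)) Let (a_n) be a sequence of real numbers with ∑_{n≥0} |a_n| < ∞. Then the Borel transform g(z) = ∑_{n≥0} (a_n/n!) z^n converges for every real z ≥ 0, the integral ∫₀^∞ g(z) e^{-z} dz converges, and ∫₀^∞ g(z) e^{-z} dz = ∑_{n≥0} a_n; i.e., the Borel sum of an (absolutely) convergent series equals its ordinary sum. -/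
open Real MeasureTheory Set
open scoped ENNReal NNReal

lemma borel_key_int (n : ℕ) :
    IntegrableOn (fun z : ℝ => z ^ n * Real.exp (-z)) (Ioi 0) ∧
    (∫ z in Ioi (0 : ℝ), z ^ n * Real.exp (-z)) = (Nat.factorial n : ℝ) := by
  have hs : (0 : ℝ) < (n : ℝ) + 1 := by positivity
  have hcong : ∀ z ∈ Ioi (0 : ℝ),
      Real.exp (-z) * z ^ (((n : ℝ) + 1) - 1) = z ^ n * Real.exp (-z) := by
    intro z hz
    rw [add_sub_cancel_right, Real.rpow_natCast, mul_comm]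
  constructor
  · exact (Real.GammaIntegral_convergent hs).congr_fun hcong measurableSet_Ioi
  · have h1 := Real.Gamma_eq_integral hs
    have h2 : Real.Gamma ((n : ℝ) + 1) = (Nat.factorial n : ℝ) := by
      exact_mod_cast Real.Gamma_nat_eq_factorial n
    rw [← setIntegral_congr_fun measurableSet_Ioi hcong, ← h1, h2]

/-- Regularity of Borel summation: if `∑ |a_n| < ∞`, then the Borel transform
`g(z) = ∑_{n≥0} (a_n/n!) z^n` converges for every `z ≥ 0`, the integral
`∫₀^∞ g(z) e^{-z} dz` converges, and it equals the ordinary sum `∑ a_n`. -/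
theorem borel_summation_regular
    (a : ℕ → ℝ) (ha : Summable fun n => |a n|)
    (g : ℝ → ℝ) (hg : ∀ z, g z = ∑' n : ℕ, a n / (Nat.factorial n : ℝ) * z ^ n) :
    (∀ z : ℝ, 0 ≤ z → Summable fun n : ℕ => a n / (Nat.factorial n : ℝ) * z ^ n) ∧
    IntegrableOn (fun z => g z * Real.exp (-z)) (Ioi 0) ∧
    (∫ z in Ioi (0 : ℝ), g z * Real.exp (-z)) = ∑' n : ℕ, a n := by
  set C := ∑' n : ℕ, |a n| with hCdef
  have haC : ∀ n, |a n| ≤ C := fun n => Summable.le_tsum ha n fun m _ => abs_nonneg _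
  -- summability of the Borel transform for every z
  have hsum : ∀ z : ℝ, Summable fun n : ℕ => a n / (Nat.factorial n : ℝ) * z ^ n := by
    intro z
    apply Summable.of_norm
    refine Summable.of_nonneg_of_le (fun n => norm_nonneg _) (fun n => ?_)
      ((Real.summable_pow_div_factorial |z|).mul_left C)
    have : ‖a n / (Nat.factorial n : ℝ) * z ^ n‖
        = |a n| * (|z| ^ n / (Nat.factorial n : ℝ)) := by
      simp only [norm_mul, norm_div, norm_pow, Real.norm_eq_abs, Nat.abs_cast]
      ring
    rw [this]
    gcongr
    exact haC n
  -- the term functions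
  set f : ℕ → ℝ → ℝ := fun n z => a n / (Nat.factorial n : ℝ) * z ^ n * Real.exp (-z)
    with hf
  have hfint : ∀ n, IntegrableOn (f n) (Ioi 0) := by
    intro n
    have : IntegrableOn (fun z : ℝ => a n / (Nat.factorial n : ℝ) * (z ^ n * Real.exp (-z)))
        (Ioi 0) := ((borel_key_int n).1).const_mul (a n / (Nat.factorial n : ℝ))
    exact IntegrableOn.congr_fun this (fun z _ => by simp [hf]; ring) measurableSet_Ioi
  have hfval : ∀ n, (∫ z in Ioi (0 : ℝ), f n z) = a n := by
    intro n
    have : (∫ z in Ioi (0 : ℝ), f n z)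
        = a n / (Nat.factorial n : ℝ) * ∫ z in Ioi (0 : ℝ), z ^ n * Real.exp (-z) := by
      rw [← integral_const_mul]
      exact setIntegral_congr_fun measurableSet_Ioi fun z _ => by ring
    rw [this, (borel_key_int n).2]
    field_simp
  -- norm integrals
  have hfnorm : ∀ n, (∫ z in Ioi (0 : ℝ), ‖f n z‖) = |a n| := by
    intro n
    have : (∫ z in Ioi (0 : ℝ), ‖f n z‖)
        = |a n| / (Nat.factorial n : ℝ) * ∫ z in Ioi (0 : ℝ), z ^ n * Real.exp (-z) := by
      rw [← integral_const_mul]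
      refine setIntegral_congr_fun measurableSet_Ioi fun z hz => ?_
      have hz0 : (0 : ℝ) ≤ z := le_of_lt hz
      rw [Real.norm_eq_abs, abs_mul, abs_mul, abs_div, Nat.abs_cast,
        abs_pow, abs_of_nonneg hz0, abs_of_pos (Real.exp_pos _)]
      ring
    rw [this, (borel_key_int n).2]
    field_simp
  have hlint : ∀ n, (∫⁻ z in Ioi (0 : ℝ), ‖f n z‖₊) = ENNReal.ofReal (|a n|) := by
    intro n
    have := ofReal_integral_norm_eq_lintegral_enorm (hfint n)
    rw [hfnorm n] at this
    exact this.symm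
  have hlsum : (∑' n, ∫⁻ z in Ioi (0 : ℝ), ‖f n z‖₊) ≠ ⊤ := by
    simp_rw [hlint]
    rw [← ENNReal.ofReal_tsum_of_nonneg (fun n => abs_nonneg _) ha]
    exact ENNReal.ofReal_ne_top
  -- pointwise: g z * exp (-z) = ∑' n, f n z
  have hpt : ∀ z : ℝ, g z * Real.exp (-z) = ∑' n, f n z := by
    intro z
    rw [hg z, ← tsum_mul_right]
  -- measurability of g
  have hgmeas : Measurable g := by
    apply measurable_of_tendsto_metrizable
      (f := fun N z => ∑ n ∈ Finset.range N, a n / (Nat.factorial n : ℝ) * z ^ n)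
    · intro N
      exact Finset.measurable_sum _ fun n _ =>
        (measurable_id.pow_const n).const_mul _
    · rw [tendsto_pi_nhds]
      intro z
      rw [hg z]
      exact (hsum z).hasSum.tendsto_sum_nat
  have hGmeas : AEStronglyMeasurable (fun z => g z * Real.exp (-z))
      (volume.restrict (Ioi (0:ℝ))) :=
    (hgmeas.mul ((Real.measurable_exp.comp measurable_neg))).aestronglyMeasurable
  -- integrability of g * exp(-·)
  have hfsummable : ∀ z : ℝ, Summable fun n => ‖f n z‖₊ := by
    intro z
    rw [← NNReal.summable_coe]
    refine Summable.of_nonneg_of_le (fun n => NNReal.coe_nonneg _) (fun n => ?_)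
      (((Real.summable_pow_div_factorial |z|).mul_left C).mul_right (Real.exp (-z)))
    have : ((‖f n z‖₊ : ℝ)) = |a n| * (|z| ^ n / (Nat.factorial n : ℝ)) * Real.exp (-z) := by
      rw [coe_nnnorm, hf]
      simp only [Real.norm_eq_abs, abs_mul, abs_div, Nat.abs_cast, abs_pow,
        abs_of_pos (Real.exp_pos _)]
      ring
    rw [this]
    gcongr
    exact haC n
  have hInt : IntegrableOn (fun z => g z * Real.exp (-z)) (Ioi 0) := by
    refine ⟨hGmeas, ?_⟩
    rw [HasFiniteIntegral]
    calc (∫⁻ z in Ioi (0:ℝ), ‖g z * Real.exp (-z)‖₊)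
        ≤ (∫⁻ z in Ioi (0:ℝ), ∑' n, (‖f n z‖₊ : ℝ≥0∞)) := by
          refine lintegral_mono fun z => ?_
          rw [hpt z]
          calc (‖∑' n, f n z‖₊ : ℝ≥0∞) ≤ ((∑' n, ‖f n z‖₊ : NNReal) : ℝ≥0∞) := by
                exact_mod_cast nnnorm_tsum_le (hfsummable z)
            _ = ∑' n, (‖f n z‖₊ : ℝ≥0∞) := ENNReal.coe_tsum (hfsummable z)
      _ = ∑' n, (∫⁻ z in Ioi (0:ℝ), ‖f n z‖₊) :=
          lintegral_tsum fun n => ((hfint n).1.nnnorm.aemeasurable.coe_nnreal_ennreal)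
      _ < ⊤ := lt_top_iff_ne_top.2 hlsum
  refine ⟨fun z _ => hsum z, hInt, ?_⟩
  have := MeasureTheory.integral_tsum (μ := volume.restrict (Ioi (0:ℝ))) (f := f)
    (fun n => (hfint n).1) hlsum
  calc (∫ z in Ioi (0 : ℝ), g z * Real.exp (-z))
      = ∫ z in Ioi (0 : ℝ), ∑' n, f n z := by
        exact setIntegral_congr_fun measurableSet_Ioi fun z _ => hpt z
    _ = ∑' n, ∫ z in Ioi (0 : ℝ), f n z := this
    _ = ∑' n, a n := by simp_rw [hfval]
end
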